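/- The integer six-tuples (k, l) = (19, 17, -7; 16, 13, 0) and (k', l') = (68, 68, -2; 67, 67, 0) satisfy k1+k2+k3 = l1+l2+l3, k1'+k2'+k3' = l1'+l2'+l3', and condition (†), and their invariants compare as follows: |σ2(k) − σ2(l)| = |σ2(k') − σ2(l')| = 137; σ3(k) − σ3(l) ≡ σ3(k') − σ3(l') (mod 137); σ1(l) ≡ σ1(l') (mod 3); but 2·σ1(l)^2 − 6·σ2(l) is NOT congruent to 2·σ1(l')^2 − 6·σ2(l') modulo 137. (Arithmetic witness that these two positively curved Eschenburg spaces have equal homotopy invariants r, s, Σ but distinct first Pontryagin classes, hence are not tangentially homotopy equivalent.) -/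
import Mathlib


/-- First elementary symmetric polynomial in three variables. -/
def esig1 (a b c : ℤ) : ℤ := a + b + c

/-- Second elementary symmetric polynomial in three variables. -/
def esig2 (a b c : ℤ) : ℤ := a * b + b * c + a * c

/-- Third elementary symmetric polynomial in three variables. -/
def esig3 (a b c : ℤ) : ℤ := a * b * c

theorem eschenburg_pair_3 :
    -- the parameter vectors define Eschenburg spaces: σ₁(k) = σ₁(l)
    esig1 19 17 (-7) = esig1 16 13 0 ∧
    esig1 68 68 (-2) = esig1 67 67 0 ∧
    -- condition (†) for both tuples
    ((19 : ℤ) ≥ 17 ∧ (17 : ℤ) > 16 ∧ (16 : ℤ) ≥ 13 ∧ (13 : ℤ) ≥ 0 ∧ (0 : ℤ) = 0) ∧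
    ((68 : ℤ) ≥ 68 ∧ (68 : ℤ) > 67 ∧ (67 : ℤ) ≥ 67 ∧ (67 : ℤ) ≥ 0 ∧ (0 : ℤ) = 0) ∧
    -- invariant r
    |esig2 19 17 (-7) - esig2 16 13 0| = 137 ∧
    |esig2 68 68 (-2) - esig2 67 67 0| = 137 ∧
    -- invariant s
    esig3 19 17 (-7) - esig3 16 13 0 ≡ esig3 68 68 (-2) - esig3 67 67 0 [ZMOD 137] ∧
    -- invariant Σ
    esig1 16 13 0 ≡ esig1 67 67 0 [ZMOD 3] ∧
    -- first Pontryagin class p₁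
    ¬ (2 * (esig1 16 13 0)^2 - 6 * esig2 16 13 0 ≡ 2 * (esig1 67 67 0)^2 - 6 * esig2 67 67 0 [ZMOD 137]) := by
  refine ⟨by decide, by decide, by norm_num, by norm_num, by decide, by decide, by decide, by decide, by decide⟩
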